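/- For every prime p, the group E(p) = ⟨u,v,w | u^p = v^p = w³ = [u,v] = 1, [u,w] = u⁻²v⁻¹, [v,w] = uv⁻¹⟩ has order 3p². -/

import Mathlib

open FreeGroup

/-- The relators of the presentation
`E(p) = ⟨u,v,w | uᵖ = vᵖ = w³ = [u,v] = 1, [u,w] = u⁻²v⁻¹, [v,w] = uv⁻¹⟩`,
with generators `u = of 0`, `v = of 1`, `w = of 2`. -/
def ErelsP (p : ℕ) : Set (FreeGroup (Fin 3)) :=
  let u : FreeGroup (Fin 3) := FreeGroup.of 0
  let v : FreeGroup (Fin 3) := FreeGroup.of 1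
  let w : FreeGroup (Fin 3) := FreeGroup.of 2
  {u ^ p, v ^ p, w ^ 3, u⁻¹ * v⁻¹ * u * v,
   (u⁻¹ * w⁻¹ * u * w) * (u⁻¹ ^ 2 * v⁻¹)⁻¹,
   (v⁻¹ * w⁻¹ * v * w) * (u * v⁻¹)⁻¹}

/-- The group `E(p)`. -/
def E (p : ℕ) : Type := PresentedGroup (ErelsP p)

instance (p : ℕ) : Group (E p) := by unfold E; infer_instance

open Multiplicative

variable (p : ℕ)

/-- The automorphism matrix M² : (a,b) ↦ (-b, a-b). -/
def tau : (ZMod p × ZMod p) ≃+ (ZMod p × ZMod p) where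
  toFun x := (-x.2, x.1 - x.2)
  invFun x := (x.2 - x.1, -x.1)
  left_inv x := by simp [Prod.ext_iff]
  right_inv x := by simp [Prod.ext_iff]
  map_add' x y := by simp [Prod.ext_iff]; constructor <;> ring

def sigma : MulAut (Multiplicative (ZMod p × ZMod p)) := AddEquiv.toMultiplicative (tau p)

lemma sigma_apply (x : ZMod p × ZMod p) : sigma p (ofAdd x) = ofAdd (-x.2, x.1 - x.2) := rfl

lemma sigma_inv_apply (x : ZMod p × ZMod p) : (sigma p)⁻¹ (ofAdd x) = ofAdd (x.2 - x.1, -x.1) := rfl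

lemma sigma_cube : sigma p ^ 3 = 1 := by
  refine MulEquiv.ext fun x => ?_
  show (sigma p) ((sigma p) ((sigma p) x)) = x
  have : x = ofAdd (toAdd x) := rfl
  rw [this, sigma_apply, sigma_apply, sigma_apply]
  simp [Prod.ext_iff]
  ring_nf
  simp

def phi : Multiplicative (ZMod 3) →* MulAut (Multiplicative (ZMod p × ZMod p)) :=
  AddMonoidHom.toMultiplicativeLeft
    (ZMod.lift 3 ⟨zmultiplesHom _ (Additive.ofMul (sigma p)),
      by simp; rw [← ofMul_zpow, zpow_ofNat, sigma_cube]; rfl⟩)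

lemma phi_one : phi p (ofAdd 1) = sigma p := by
  have h : phi p (ofAdd 1)
      = Additive.toMul ((ZMod.lift 3 ⟨zmultiplesHom _ (Additive.ofMul (sigma p)),
        by simp; rw [← ofMul_zpow, zpow_ofNat, sigma_cube]; rfl⟩) (1 : ZMod 3)) := rfl
  rw [h, show ((1:ZMod 3)) = ((1:ℤ) : ZMod 3) by norm_num, ZMod.lift_coe]
  simp [zmultiplesHom_apply]

abbrev Gp := Multiplicative (ZMod p × ZMod p) ⋊[phi p] Multiplicative (ZMod 3)

instance : Group (Gp p) := by unfold Gp; infer_instance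

open SemidirectProduct

def Ug : Gp p := inl (ofAdd (1, 0))
def Vg : Gp p := inl (ofAdd (0, 1))
def Wg : Gp p := inr (ofAdd 1)

lemma conjU : Wg p * (Ug p)⁻¹ * (Vg p)⁻¹ * (Wg p)⁻¹ = Ug p := by
  have h : (inl (phi p (ofAdd 1) (ofAdd (-1, -1))) : Gp p)
      = inr (ofAdd 1) * inl (ofAdd (-1, -1)) * inr (ofAdd 1)⁻¹ := inl_aut _ _
  rw [phi_one, sigma_apply] at h
  norm_num at h
  calc Wg p * (Ug p)⁻¹ * (Vg p)⁻¹ * (Wg p)⁻¹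
      = inr (ofAdd 1) * inl ((ofAdd ((1:ZMod p), (0:ZMod p)))⁻¹ * (ofAdd (0,1))⁻¹) * (inr (ofAdd 1))⁻¹ := by
        simp only [Ug, Vg, Wg]; rw [MonoidHom.map_mul, MonoidHom.map_inv, MonoidHom.map_inv]; simp only [mul_assoc]
    _ = Ug p := by
        rw [show (ofAdd ((1:ZMod p), (0:ZMod p)))⁻¹ * (ofAdd ((0:ZMod p), (1:ZMod p)))⁻¹
            = ofAdd ((-1 : ZMod p), (-1 : ZMod p)) by
          simp [← ofAdd_neg, ← ofAdd_add, Prod.ext_iff]]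
        rw [← h]; rfl

lemma conjV : Wg p * (Ug p) * (Wg p)⁻¹ = Vg p := by
  have h : (inl (phi p (ofAdd 1) (ofAdd ((1:ZMod p), (0:ZMod p)))) : Gp p)
      = inr (ofAdd 1) * inl (ofAdd (1, 0)) * inr (ofAdd 1)⁻¹ := inl_aut _ _
  rw [phi_one, sigma_apply] at h
  norm_num at h
  rw [Wg, Ug, ← h, Vg]

lemma Ug_Vg_comm : Ug p * Vg p = Vg p * Ug p := by
  rw [Ug, Vg, ← MonoidHom.map_mul (inl : _ →* Gp p), ← MonoidHom.map_mul (inl : _ →* Gp p), mul_comm]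

lemma Ug_pow_p : Ug p ^ p = 1 := by
  rw [Ug, ← MonoidHom.map_pow (inl : _ →* Gp p), ← ofAdd_nsmul]
  simp [Prod.smul_mk, nsmul_eq_mul]
  rfl

lemma Wg_pow_3 : Wg p ^ 3 = 1 := by
  rw [Wg, ← MonoidHom.map_pow (inr : _ →* Gp p), ← ofAdd_nsmul]
  rw [show (3 : ℕ) • (1 : ZMod 3) = 0 from by decide]
  simp

lemma Vg_pow_p : Vg p ^ p = 1 := by
  rw [Vg, ← MonoidHom.map_pow (inl : _ →* Gp p), ← ofAdd_nsmul]
  simp [Prod.smul_mk, nsmul_eq_mul]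
  rfl

lemma closure_Gp [NeZero p] : Subgroup.closure ({Ug p, Vg p, Wg p} : Set (Gp p)) = ⊤ := by
  rw [eq_top_iff]
  rintro ⟨n, h⟩ -
  have key : (⟨n, h⟩ : Gp p)
      = Ug p ^ ((toAdd n).1.val) * Vg p ^ ((toAdd n).2.val) * Wg p ^ ((toAdd h).val) := by
    rw [mk_eq_inl_mul_inr, Ug, Vg, Wg,
      ← MonoidHom.map_pow (inl : _ →* Gp p), ← MonoidHom.map_pow (inl : _ →* Gp p),
      ← MonoidHom.map_pow (inr : _ →* Gp p), ← MonoidHom.map_mul (inl : _ →* Gp p),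
      ← ofAdd_nsmul, ← ofAdd_nsmul, ← ofAdd_nsmul, ← ofAdd_add]
    congr 1
    · congr 1
      rw [← ofAdd_toAdd n]
      congr 1
      ext
      · simp [nsmul_eq_mul, ZMod.natCast_val, ZMod.cast_id]
      · simp [nsmul_eq_mul, ZMod.natCast_val, ZMod.cast_id]
    · congr 1
      rw [← ofAdd_toAdd h]
      congr 1
      simp [nsmul_eq_mul, ZMod.natCast_val, ZMod.cast_id]
  rw [key]
  exact mul_mem (mul_mem (pow_mem (Subgroup.subset_closure (by simp)) _)
    (pow_mem (Subgroup.subset_closure (by simp)) _))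
    (pow_mem (Subgroup.subset_closure (by simp)) _)

lemma card_Gp : Nat.card (Gp p) = 3 * p ^ 2 := by
  have e : Gp p ≃ (Multiplicative (ZMod p × ZMod p)) × Multiplicative (ZMod 3) :=
    ⟨fun g => (g.left, g.right), fun x => ⟨x.1, x.2⟩, fun g => rfl, fun x => rfl⟩
  rw [Nat.card_congr e, Nat.card_prod, Nat.card_congr Multiplicative.toAdd,
    Nat.card_congr Multiplicative.toAdd, Nat.card_prod, Nat.card_zmod, Nat.card_zmod]
  ring

def fG : Fin 3 → Gp p := ![Ug p, Vg p, Wg p]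

lemma hrels : ∀ r ∈ ErelsP p, FreeGroup.lift (fG p) r = 1 := by
  have hu : FreeGroup.lift (fG p) (FreeGroup.of (0 : Fin 3)) = Ug p := by simp [fG]
  have hv : FreeGroup.lift (fG p) (FreeGroup.of (1 : Fin 3)) = Vg p := by simp [fG]
  have hw : FreeGroup.lift (fG p) (FreeGroup.of (2 : Fin 3)) = Wg p := by simp [fG]
  have hUW : (Wg p)⁻¹ * Ug p * Wg p = (Ug p)⁻¹ * (Vg p)⁻¹ := by
    conv_lhs => rw [← conjU p]
    group
  have hVW : (Wg p)⁻¹ * Vg p * Wg p = Ug p := by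
    conv_lhs => rw [← conjV p]
    group
  intro r hr
  rcases hr with h | h | h | h | h | h <;> subst h <;>
    simp only [_root_.map_mul, _root_.map_pow, _root_.map_inv, hu, hv, hw]
  · exact Ug_pow_p p
  · exact Vg_pow_p p
  · exact Wg_pow_3 p
  · rw [show (Ug p)⁻¹ * (Vg p)⁻¹ * Ug p * Vg p
        = (Ug p)⁻¹ * ((Vg p)⁻¹ * (Ug p * Vg p)) from by group,
      Ug_Vg_comm p]
    group
  · rw [show (Ug p)⁻¹ * (Wg p)⁻¹ * Ug p * Wg p
        = (Ug p)⁻¹ * ((Wg p)⁻¹ * Ug p * Wg p) from by group, hUW]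
    group
  · rw [show (Vg p)⁻¹ * (Wg p)⁻¹ * Vg p * Wg p
        = (Vg p)⁻¹ * ((Wg p)⁻¹ * Vg p * Wg p) from by group, hVW,
      show (Vg p)⁻¹ * Ug p * (Ug p * (Vg p)⁻¹)⁻¹
        = (Vg p)⁻¹ * (Ug p * Vg p) * (Ug p)⁻¹ from by group, Ug_Vg_comm p]
    group

section NF

variable {G : Type*} [Group G]

lemma pow_mod_eq {g : G} {n : ℕ} (hg : g ^ n = 1) (m : ℕ) : g ^ m = g ^ (m % n) := by
  conv_lhs => rw [← Nat.div_add_mod m n]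
  rw [pow_add, pow_mul, hg, one_pow, one_mul]

lemma pow_valCast {g : G} {n : ℕ} [NeZero n] (hg : g ^ n = 1) (m : ℕ) :
    g ^ m = g ^ ((m : ZMod n)).val := by
  rw [ZMod.val_natCast, ← pow_mod_eq hg]

lemma cast_valCast {n : ℕ} [NeZero n] (a : ZMod n) (m : ℕ) :
    ((a.val + m : ℕ) : ZMod n) = a + m := by
  push_cast [ZMod.natCast_val, ZMod.cast_id]
  ring

lemma cast_pred {p : ℕ} (hp1 : 1 ≤ p) : ((p - 1 : ℕ) : ZMod p) = -1 := by
  rw [Nat.cast_sub hp1]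
  simp

lemma NF_surjective {p : ℕ} [NeZero p] (hp1 : 1 ≤ p) {u v w : G}
    (hu : u ^ p = 1) (hv : v ^ p = 1) (hw : w ^ 3 = 1)
    (hcomm : v * u = u * v) (hcuw : w⁻¹ * u * w = u⁻¹ * v⁻¹) (hcvw : w⁻¹ * v * w = u)
    (hgen : Subgroup.closure ({u, v, w} : Set G) = ⊤) :
    Function.Surjective (fun x : ZMod 3 × ZMod p × ZMod p =>
      w ^ x.1.val * u ^ x.2.1.val * v ^ x.2.2.val) := by
  set f : ZMod 3 × ZMod p × ZMod p → G := fun x =>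
    w ^ x.1.val * u ^ x.2.1.val * v ^ x.2.2.val with hf
  have hc : Commute u v := hcomm.symm
  have huinv : u⁻¹ = u ^ (p - 1) := inv_eq_of_mul_eq_one_right
    (by rw [← pow_succ', Nat.sub_add_cancel hp1]; exact hu)
  have hvinv : v⁻¹ = v ^ (p - 1) := inv_eq_of_mul_eq_one_right
    (by rw [← pow_succ', Nat.sub_add_cancel hp1]; exact hv)
  have hwinv : w⁻¹ = w ^ 2 := inv_eq_of_mul_eq_one_right
    (by rw [← pow_succ']; exact hw)
  have hured : ∀ m : ℕ, u ^ m = u ^ ((m : ZMod p)).val := fun m => pow_valCast hu m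
  have hvred : ∀ m : ℕ, v ^ m = v ^ ((m : ZMod p)).val := fun m => pow_valCast hv m
  have hwred : ∀ m : ℕ, w ^ m = w ^ ((m : ZMod 3)).val := fun m => pow_valCast hw m
  have mulU : ∀ (c : ZMod 3) (a b : ZMod p) (n : ℕ),
      (w ^ c.val * u ^ a.val * v ^ b.val) * u ^ n
        = w ^ c.val * u ^ ((a + n).val) * v ^ b.val := by
    intro c a b n
    have hswap : v ^ b.val * u ^ n = u ^ n * v ^ b.val := (hc.symm.pow_pow _ _).eq
    calc (w ^ c.val * u ^ a.val * v ^ b.val) * u ^ n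
        = w ^ c.val * (u ^ a.val * (v ^ b.val * u ^ n)) := by group
      _ = w ^ c.val * (u ^ a.val * (u ^ n * v ^ b.val)) := by rw [hswap]
      _ = w ^ c.val * (u ^ (a.val + n) * v ^ b.val) := by
          rw [pow_add]
          group
      _ = w ^ c.val * u ^ ((a + n).val) * v ^ b.val := by
          rw [hured (a.val + n), cast_valCast, mul_assoc]
  have mulV : ∀ (c : ZMod 3) (a b : ZMod p) (n : ℕ),
      (w ^ c.val * u ^ a.val * v ^ b.val) * v ^ n
        = w ^ c.val * u ^ a.val * v ^ ((b + n).val) := by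
    intro c a b n
    rw [mul_assoc, ← pow_add, hvred (b.val + n), cast_valCast]
  have mulW : ∀ (c : ZMod 3) (a b : ZMod p),
      (w ^ c.val * u ^ a.val * v ^ b.val) * w
        = w ^ ((c + 1).val) * u ^ ((b - a).val) * v ^ ((-a).val) := by
    intro c a b
    have h1 : ∀ m : ℕ, u ^ m * w = w * (u ^ ((p-1)*m) * v ^ ((p-1)*m)) := by
      intro m
      have e1 : u ^ m * w = w * (w⁻¹ * u * w) ^ m := by
        rw [show (w⁻¹ * u * w) = w⁻¹ * u * w⁻¹⁻¹ by rw [inv_inv], conj_pow]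
        group
      rw [e1, hcuw]
      congr 1
      rw [huinv, hvinv, (hc.pow_pow (p-1) (p-1)).mul_pow, ← pow_mul, ← pow_mul]
    have h2 : ∀ m : ℕ, v ^ m * w = w * u ^ m := by
      intro m
      have e1 : v ^ m * w = w * (w⁻¹ * v * w) ^ m := by
        rw [show (w⁻¹ * v * w) = w⁻¹ * v * w⁻¹⁻¹ by rw [inv_inv], conj_pow]
        group
      rw [e1, hcvw]
    have c1 : ((c.val + 1 : ℕ) : ZMod 3) = c + 1 := by
      push_cast [ZMod.natCast_val, ZMod.cast_id]
      ring
    have c2 : (((p-1)*a.val + b.val : ℕ) : ZMod p) = b - a := by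
      push_cast [ZMod.natCast_val, ZMod.cast_id, cast_pred hp1]
      ring
    have c3 : (((p-1)*a.val : ℕ) : ZMod p) = -a := by
      push_cast [ZMod.natCast_val, ZMod.cast_id, cast_pred hp1]
      ring
    calc (w ^ c.val * u ^ a.val * v ^ b.val) * w
        = w ^ c.val * u ^ a.val * (v ^ b.val * w) := by group
      _ = w ^ c.val * (u ^ a.val * w) * u ^ b.val := by rw [h2]; group
      _ = w ^ c.val * (w * (u ^ ((p-1)*a.val) * v ^ ((p-1)*a.val))) * u ^ b.val := by
          rw [h1]
      _ = w ^ (c.val + 1) * (u ^ ((p-1)*a.val) * (v ^ ((p-1)*a.val) * u ^ b.val)) := by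
          rw [pow_succ]; group
      _ = w ^ (c.val + 1) * (u ^ ((p-1)*a.val) * (u ^ b.val * v ^ ((p-1)*a.val))) := by
          rw [(hc.symm.pow_pow _ _).eq]
      _ = w ^ (c.val + 1) * u ^ ((p-1)*a.val + b.val) * v ^ ((p-1)*a.val) := by
          rw [← mul_assoc (u ^ ((p-1)*a.val)), ← pow_add, ← mul_assoc]
      _ = w ^ ((c + 1).val) * u ^ ((b - a).val) * v ^ ((-a).val) := by
          rw [hwred (c.val + 1), hured ((p-1)*a.val + b.val), hvred ((p-1)*a.val), c1, c2, c3]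
  intro x
  have hx : x ∈ Subgroup.closure ({u, v, w} : Set G) := hgen ▸ Subgroup.mem_top x
  refine Subgroup.closure_induction_right ?_ ?_ ?_ hx
  · exact ⟨(0, 0, 0), by simp [hf]⟩
  · rintro y - z hz ⟨⟨c, a, b⟩, rfl⟩
    rcases hz with rfl | rfl | rfl
    · exact ⟨(c, a + 1, b), by simpa [hf] using (mulU c a b 1).symm⟩
    · exact ⟨(c, a, b + 1), by simpa [hf] using (mulV c a b 1).symm⟩
    · exact ⟨(c + 1, b - a, -a), by simpa [hf] using (mulW c a b).symm⟩
  · rintro y - z hz ⟨⟨c, a, b⟩, rfl⟩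
    rcases hz with rfl | rfl | rfl
    · refine ⟨(c, a + ((p-1 : ℕ) : ZMod p), b), ?_⟩
      rw [hf]
      rw [huinv]
      exact (mulU c a b (p-1)).symm
    · refine ⟨(c, a, b + ((p-1 : ℕ) : ZMod p)), ?_⟩
      rw [hf]
      rw [hvinv]
      exact (mulV c a b (p-1)).symm
    · refine ⟨(c + 1 + 1, -a - (b - a), -(b - a)), ?_⟩
      rw [hf, hwinv, pow_two, ← mul_assoc, mulW c a b, mulW (c+1) (b-a) (-a)]

end NF

def mkE : FreeGroup (Fin 3) →* E p := QuotientGroup.mk' (Subgroup.normalClosure (ErelsP p))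

lemma relE {r : FreeGroup (Fin 3)} (hr : r ∈ ErelsP p) : mkE p r = 1 :=
  (QuotientGroup.eq_one_iff r).2 (Subgroup.subset_normalClosure hr)

def eu : E p := mkE p (FreeGroup.of 0)
def ev : E p := mkE p (FreeGroup.of 1)
def ew : E p := mkE p (FreeGroup.of 2)

lemma eu_def : mkE p (FreeGroup.of 0) = eu p := rfl
lemma ev_def : mkE p (FreeGroup.of 1) = ev p := rfl
lemma ew_def : mkE p (FreeGroup.of 2) = ew p := rfl

lemma eu_pow : eu p ^ p = 1 := by
  rw [eu, ← MonoidHom.map_pow (mkE p)]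
  exact relE p (by simp [ErelsP])

lemma ev_pow : ev p ^ p = 1 := by
  rw [ev, ← MonoidHom.map_pow (mkE p)]
  exact relE p (by simp [ErelsP])

lemma ew_pow : ew p ^ 3 = 1 := by
  rw [ew, ← MonoidHom.map_pow (mkE p)]
  exact relE p (by simp [ErelsP])

lemma comE : ev p * eu p = eu p * ev p := by
  have h : (eu p)⁻¹ * (ev p)⁻¹ * eu p * ev p = 1 := by
    have h0 := relE p (show (FreeGroup.of 0)⁻¹ * (FreeGroup.of 1)⁻¹ * FreeGroup.of 0
        * FreeGroup.of 1 ∈ ErelsP p by simp [ErelsP])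
    simpa only [_root_.map_mul, _root_.map_inv, eu_def, ev_def] using h0
  rw [mul_assoc, mul_assoc] at h
  have h2 : eu p = (ev p)⁻¹ * (eu p * ev p) := inv_mul_eq_one.mp h
  conv_lhs => rw [h2]
  group

lemma cuwE : (ew p)⁻¹ * eu p * ew p = (eu p)⁻¹ * (ev p)⁻¹ := by
  have h : (eu p)⁻¹ * (ew p)⁻¹ * eu p * ew p * (((eu p)⁻¹) ^ 2 * (ev p)⁻¹)⁻¹ = 1 := by
    have h0 := relE p (show ((FreeGroup.of 0)⁻¹ * (FreeGroup.of 2)⁻¹ * FreeGroup.of 0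
        * FreeGroup.of 2) * (((FreeGroup.of (0:Fin 3))⁻¹) ^ 2 * (FreeGroup.of 1)⁻¹)⁻¹ ∈ ErelsP p
      by simp [ErelsP])
    simpa only [_root_.map_mul, _root_.map_inv, _root_.map_pow, eu_def, ev_def, ew_def] using h0
  have h5 : (eu p)⁻¹ * (ew p)⁻¹ * eu p * ew p = ((eu p)⁻¹) ^ 2 * (ev p)⁻¹ :=
    mul_inv_eq_one.mp h
  calc (ew p)⁻¹ * eu p * ew p
      = eu p * ((eu p)⁻¹ * (ew p)⁻¹ * eu p * ew p) := by group
    _ = eu p * (((eu p)⁻¹) ^ 2 * (ev p)⁻¹) := by rw [h5]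
    _ = (eu p)⁻¹ * (ev p)⁻¹ := by group

lemma cvwE : (ew p)⁻¹ * ev p * ew p = eu p := by
  have h : (ev p)⁻¹ * (ew p)⁻¹ * ev p * ew p * (eu p * (ev p)⁻¹)⁻¹ = 1 := by
    have h0 := relE p (show ((FreeGroup.of 1)⁻¹ * (FreeGroup.of 2)⁻¹ * FreeGroup.of 1
        * FreeGroup.of 2) * (FreeGroup.of (0:Fin 3) * (FreeGroup.of 1)⁻¹)⁻¹ ∈ ErelsP p
      by simp [ErelsP])
    simpa only [_root_.map_mul, _root_.map_inv, eu_def, ev_def, ew_def] using h0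
  have h6 : (ev p)⁻¹ * (ew p)⁻¹ * ev p * ew p = eu p * (ev p)⁻¹ := mul_inv_eq_one.mp h
  calc (ew p)⁻¹ * ev p * ew p
      = ev p * ((ev p)⁻¹ * (ew p)⁻¹ * ev p * ew p) := by group
    _ = ev p * (eu p * (ev p)⁻¹) := by rw [h6]
    _ = eu p := by rw [← mul_assoc, comE, mul_inv_cancel_right]

lemma genE : Subgroup.closure ({eu p, ev p, ew p} : Set (E p)) = ⊤ := by
  rw [eq_top_iff]
  intro x _
  have hx : x ∈ Subgroup.closure (Set.range (PresentedGroup.of (rels := ErelsP p))) := by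
    rw [PresentedGroup.closure_range_of]
    trivial
  refine Subgroup.closure_mono ?_ hx
  rintro - ⟨i, rfl⟩
  fin_cases i
  · exact Or.inl rfl
  · exact Or.inr (Or.inl rfl)
  · exact Or.inr (Or.inr rfl)

theorem card_E (p : ℕ) (hp : p.Prime) : Nat.card (E p) = 3 * p ^ 2 := by
  haveI : Fact p.Prime := ⟨hp⟩
  have hsurj : Function.Surjective (fun x : ZMod 3 × ZMod p × ZMod p =>
      ew p ^ x.1.val * eu p ^ x.2.1.val * ev p ^ x.2.2.val) :=
    NF_surjective hp.one_lt.le (eu_pow p) (ev_pow p) (ew_pow p) (comE p) (cuwE p) (cvwE p)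
      (genE p)
  have hfin : Finite (E p) := Finite.of_surjective _ hsurj
  have hle : Nat.card (E p) ≤ 3 * p ^ 2 := by
    have h := Nat.card_le_card_of_surjective _ hsurj
    refine le_trans h (le_of_eq ?_)
    simp only [Nat.card_prod, Nat.card_zmod]
    ring
  let ψ : E p →* Gp p := PresentedGroup.toGroup (hrels p)
  have hψ : Function.Surjective ψ := by
    rw [← MonoidHom.range_eq_top]
    rw [eq_top_iff, ← closure_Gp p]
    refine (Subgroup.closure_le _).2 ?_
    rintro x (rfl | rfl | rfl)
    · exact ⟨PresentedGroup.of 0, PresentedGroup.toGroup.of (hrels p)⟩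
    · exact ⟨PresentedGroup.of 1, PresentedGroup.toGroup.of (hrels p)⟩
    · exact ⟨PresentedGroup.of 2, PresentedGroup.toGroup.of (hrels p)⟩
  have hcard : Nat.card (Gp p) ≤ Nat.card (E p) := Nat.card_le_card_of_surjective ψ hψ
  rw [card_Gp p] at hcard
  omega
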